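/- arXiv:1208.2429 — 2 statements merged into one kernel-verified Lean document; each statement's English description precedes it below -/
import Mathlib

section
/- Let A ∈ ℝ^{n×n}, B ∈ ℝ^{n×m}, and let P ∈ ℝ^{n×n} be symmetric positive semidefinite and satisfy the Bellman-type inequality xᵀPx ≤ xᵀQx + uᵀRu + (Ax+Bu)ᵀP(Ax+Bu) for all x ∈ ℝⁿ and u ∈ ℝᵐ, where Q ⪰ 0 and R ⪰ 0 are symmetric. Then for every x ∈ ℝⁿ and every control sequence (u(k))_{k∈ℕ} such that the trajectory φ(k;x,u) of x⁺ = A x + B u converges to 0, one has xᵀPx ≤ Σ_{k=0}^∞ [φ(k;x,u)ᵀQφ(k;x,u) + u(k)ᵀRu(k)]. -/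
open scoped Matrix

/-- The state `φ(k; x, u)` of the linear system `x⁺ = A x + B u` at time `k`,
starting from `x(0) = x` under the control sequence `u`. -/
def traj {n m : ℕ} (A : Matrix (Fin n) (Fin n) ℝ) (B : Matrix (Fin n) (Fin m) ℝ)
    (x : Fin n → ℝ) (u : ℕ → Fin m → ℝ) : ℕ → Fin n → ℝ
  | 0 => x
  | k + 1 => A.mulVec (traj A B x u k) + B.mulVec (u k)

/-- If `P ⪰ 0` is symmetric and satisfies the Bellman-type inequality
`xᵀPx ≤ xᵀQx + uᵀRu + (Ax+Bu)ᵀP(Ax+Bu)` for all `x, u`, then for every `x` and every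
control sequence whose trajectory converges to `0`, the infinite-horizon quadratic cost
(the sum taken in `ℝ≥0∞` since it may be infinite) is at least `xᵀPx`:
`xᵀPx ≤ Σ_{k=0}^∞ [φ(k)ᵀQφ(k) + u(k)ᵀRu(k)]`. -/
theorem stmt_9 {n m : ℕ} (A : Matrix (Fin n) (Fin n) ℝ) (B : Matrix (Fin n) (Fin m) ℝ)
    (Q : Matrix (Fin n) (Fin n) ℝ) (R : Matrix (Fin m) (Fin m) ℝ)
    (P : Matrix (Fin n) (Fin n) ℝ)
    (hQ : Q.PosSemidef) (hR : R.PosSemidef) (hP : P.PosSemidef)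
    (hBellman : ∀ (x : Fin n → ℝ) (u : Fin m → ℝ),
      x ⬝ᵥ P.mulVec x ≤ x ⬝ᵥ Q.mulVec x + u ⬝ᵥ R.mulVec u +
        (A.mulVec x + B.mulVec u) ⬝ᵥ P.mulVec (A.mulVec x + B.mulVec u)) :
    ∀ (x : Fin n → ℝ) (u : ℕ → Fin m → ℝ),
      Filter.Tendsto (fun k => traj A B x u k) Filter.atTop (nhds 0) →
      ENNReal.ofReal (x ⬝ᵥ P.mulVec x) ≤
        ∑' k : ℕ, ENNReal.ofReal
          (traj A B x u k ⬝ᵥ Q.mulVec (traj A B x u k) + u k ⬝ᵥ R.mulVec (u k)) := by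
  intro x u hconv
  set φ := traj A B x u with hφ
  set c : ℕ → ℝ := fun k => φ k ⬝ᵥ Q.mulVec (φ k) + u k ⬝ᵥ R.mulVec (u k) with hc
  have hc0 : ∀ k, 0 ≤ c k := fun k =>
    add_nonneg (by simpa using hQ.dotProduct_mulVec_nonneg (φ k)) (by simpa using hR.dotProduct_mulVec_nonneg (u k))
  -- telescoping inequality
  have key : ∀ N : ℕ, x ⬝ᵥ P.mulVec x ≤
      (∑ k ∈ Finset.range N, c k) + φ N ⬝ᵥ P.mulVec (φ N) := by
    intro N
    induction N with
    | zero => simp [hφ, traj]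
    | succ N ih =>
      calc x ⬝ᵥ P.mulVec x ≤ (∑ k ∈ Finset.range N, c k) + φ N ⬝ᵥ P.mulVec (φ N) := ih
        _ ≤ (∑ k ∈ Finset.range N, c k) + (c N + φ (N+1) ⬝ᵥ P.mulVec (φ (N+1))) := by
            have := hBellman (φ N) (u N)
            have hstep : φ (N+1) = A.mulVec (φ N) + B.mulVec (u N) := rfl
            rw [hstep]
            simp only [hc]
            linarith
        _ = (∑ k ∈ Finset.range (N+1), c k) + φ (N+1) ⬝ᵥ P.mulVec (φ (N+1)) := by
            rw [Finset.sum_range_succ]; ring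
  -- in ENNReal
  have keyE : ∀ N : ℕ, ENNReal.ofReal (x ⬝ᵥ P.mulVec x) ≤
      (∑ k ∈ Finset.range N, ENNReal.ofReal (c k)) + ENNReal.ofReal (φ N ⬝ᵥ P.mulVec (φ N)) := by
    intro N
    calc ENNReal.ofReal (x ⬝ᵥ P.mulVec x)
        ≤ ENNReal.ofReal ((∑ k ∈ Finset.range N, c k) + φ N ⬝ᵥ P.mulVec (φ N)) :=
          ENNReal.ofReal_le_ofReal (key N)
      _ ≤ ENNReal.ofReal (∑ k ∈ Finset.range N, c k) + ENNReal.ofReal (φ N ⬝ᵥ P.mulVec (φ N)) :=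
          ENNReal.ofReal_add_le
      _ = (∑ k ∈ Finset.range N, ENNReal.ofReal (c k)) + ENNReal.ofReal (φ N ⬝ᵥ P.mulVec (φ N)) := by
          rw [ENNReal.ofReal_sum_of_nonneg (fun k _ => hc0 k)]
  -- limits
  have hsum : Filter.Tendsto (fun N => ∑ k ∈ Finset.range N, ENNReal.ofReal (c k))
      Filter.atTop (nhds (∑' k, ENNReal.ofReal (c k))) := ENNReal.tendsto_nat_tsum _
  have hPcont : Continuous fun v : Fin n → ℝ => v ⬝ᵥ P.mulVec v := by
    continuity
  have hP0 : Filter.Tendsto (fun N => ENNReal.ofReal (φ N ⬝ᵥ P.mulVec (φ N)))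
      Filter.atTop (nhds 0) := by
    have h1 : Filter.Tendsto (fun N => φ N ⬝ᵥ P.mulVec (φ N)) Filter.atTop
        (nhds ((0 : Fin n → ℝ) ⬝ᵥ P.mulVec 0)) := (hPcont.tendsto 0).comp hconv
    have h2 : ((0 : Fin n → ℝ) ⬝ᵥ P.mulVec 0) = 0 := by simp
    rw [h2] at h1
    have := (ENNReal.continuous_ofReal.tendsto 0).comp h1
    rw [ENNReal.ofReal_zero] at this
    exact this
  have hlim : Filter.Tendsto
      (fun N => (∑ k ∈ Finset.range N, ENNReal.ofReal (c k)) +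
        ENNReal.ofReal (φ N ⬝ᵥ P.mulVec (φ N))) Filter.atTop
      (nhds ((∑' k, ENNReal.ofReal (c k)) + 0)) := by
    exact hsum.add hP0
  rw [add_zero] at hlim
  exact le_of_tendsto_of_tendsto' tendsto_const_nhds hlim keyE
end

section
/- Let A ∈ ℝ^{n×n}, B ∈ ℝ^{n×m}, X ⊆ ℝⁿ, U ⊆ ℝᵐ, let X∞ ⊆ X be the maximal controllable set, let V_p ≥ 0 and β > 0 satisfy the decrease property: for every y ∈ X∞ there exists u* ∈ U with A y + B u* ∈ X∞ and β V_p(A y + B u*) + ℓ(y,u*) ≤ β V_p(y). Fix N ≥ 1 and x ∈ X∞, and suppose u⁰ = (u⁰(0),…,u⁰(N−1)) is a minimizer over the admissible set U_N^p(x) (sequences with u(k) ∈ U, φ(k;x,u) ∈ X for 0 ≤ k ≤ N−1, and φ(N;x,u) ∈ X∞) of the cost V_{N,β}(x,u) := β V_p(φ(N;x,u)) + Σ_{k=0}^{N−1} ℓ(φ(k;x,u),u(k)). Let x⁺ := A x + B u⁰(0). Then x⁺ ∈ X∞, the admissible set U_N^p(x⁺) is nonempty, and V⁰_{N,β}(x⁺)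 ≤ V⁰_{N,β}(x) − ℓ(x,u⁰(0)), where V⁰_{N,β} denotes the optimal value function. -/
open scoped Matrix

/-- The stage cost `ℓ(x,u) = xᵀQx + uᵀRu`. -/
def stageCost {n m : ℕ} (Q : Matrix (Fin n) (Fin n) ℝ) (R : Matrix (Fin m) (Fin m) ℝ)
    (x : Fin n → ℝ) (u : Fin m → ℝ) : ℝ :=
  x ⬝ᵥ Q.mulVec x + u ⬝ᵥ R.mulVec u

/-- The set `U_N^p(x)` of `N`-step admissible control sequences: inputs in `U`, states in
`X` for `0 ≤ k ≤ N−1`, and `φ(N; x, u) ∈ X∞`. -/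
def UNp {n m : ℕ} (A : Matrix (Fin n) (Fin n) ℝ) (B : Matrix (Fin n) (Fin m) ℝ)
    (X : Set (Fin n → ℝ)) (U : Set (Fin m → ℝ)) (Xinf : Set (Fin n → ℝ)) (N : ℕ)
    (x : Fin n → ℝ) : Set (ℕ → Fin m → ℝ) :=
  {u | (∀ k < N, u k ∈ U) ∧ (∀ k < N, traj A B x u k ∈ X) ∧ traj A B x u N ∈ Xinf}

/-- The finite-horizon cost `V_{N,β}(x,u) = β V_p(φ(N;x,u)) + Σ_{k<N} ℓ(φ(k;x,u),u(k))`. -/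
def VN {n m : ℕ} (A : Matrix (Fin n) (Fin n) ℝ) (B : Matrix (Fin n) (Fin m) ℝ)
    (Q : Matrix (Fin n) (Fin n) ℝ) (R : Matrix (Fin m) (Fin m) ℝ)
    (Vp : (Fin n → ℝ) → ℝ) (β : ℝ) (N : ℕ) (x : Fin n → ℝ) (u : ℕ → Fin m → ℝ) : ℝ :=
  β * Vp (traj A B x u N) + ∑ k ∈ Finset.range N, stageCost Q R (traj A B x u k) (u k)

/-- The optimal value function `V⁰_{N,β}(x)`. -/
noncomputable def V0 {n m : ℕ} (A : Matrix (Fin n) (Fin n) ℝ) (B : Matrix (Fin n) (Fin m) ℝ)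
    (X : Set (Fin n → ℝ)) (U : Set (Fin m → ℝ)) (Xinf : Set (Fin n → ℝ))
    (Q : Matrix (Fin n) (Fin n) ℝ) (R : Matrix (Fin m) (Fin m) ℝ)
    (Vp : (Fin n → ℝ) → ℝ) (β : ℝ) (N : ℕ) (x : Fin n → ℝ) : ℝ :=
  sInf {v : ℝ | ∃ u ∈ UNp A B X U Xinf N x, v = VN A B Q R Vp β N x u}


lemma traj_congr {n m : ℕ} (A : Matrix (Fin n) (Fin n) ℝ) (B : Matrix (Fin n) (Fin m) ℝ)
    (x : Fin n → ℝ) {u v : ℕ → Fin m → ℝ} (k : ℕ) (h : ∀ j < k, u j = v j) :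
    traj A B x u k = traj A B x v k := by
  induction k with
  | zero => rfl
  | succ k ih =>
    show A.mulVec (traj A B x u k) + B.mulVec (u k) = A.mulVec (traj A B x v k) + B.mulVec (v k)
    rw [ih (fun j hj => h j (hj.trans (Nat.lt_succ_self k))), h k (Nat.lt_succ_self k)]

lemma traj_shift {n m : ℕ} (A : Matrix (Fin n) (Fin n) ℝ) (B : Matrix (Fin n) (Fin m) ℝ)
    (x : Fin n → ℝ) (u : ℕ → Fin m → ℝ) (j k : ℕ) :
    traj A B x u (j + k) = traj A B (traj A B x u j) (fun i => u (j + i)) k := by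
  induction k with
  | zero => rfl
  | succ k ih =>
    show A.mulVec (traj A B x u (j + k)) + B.mulVec (u (j + k)) = _
    rw [ih]; rfl

lemma stageCost_nonneg {n m : ℕ} {Q : Matrix (Fin n) (Fin n) ℝ} {R : Matrix (Fin m) (Fin m) ℝ}
    (hQ : Q.PosSemidef) (hR : R.PosSemidef) (x : Fin n → ℝ) (u : Fin m → ℝ) :
    0 ≤ stageCost Q R x u := by
  have h1 := hQ.dotProduct_mulVec_nonneg x
  have h2 := hR.dotProduct_mulVec_nonneg u
  simp only [star_trivial] at h1 h2
  exact add_nonneg h1 h2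

/-- (Recursive feasibility and descent.) If `u⁰` minimizes the
finite-horizon cost over `U_N^p(x)` for `x ∈ X∞` (the maximal controllable set), then
the successor state `x⁺ = Ax + Bu⁰(0)` belongs to `X∞`, its admissible set `U_N^p(x⁺)`
is nonempty, and `V⁰_{N,β}(x⁺) ≤ V⁰_{N,β}(x) − ℓ(x, u⁰(0))`. -/
theorem stmt_11 {n m : ℕ} (A : Matrix (Fin n) (Fin n) ℝ) (B : Matrix (Fin n) (Fin m) ℝ)
    (X : Set (Fin n → ℝ)) (U : Set (Fin m → ℝ))
    (Q : Matrix (Fin n) (Fin n) ℝ) (R : Matrix (Fin m) (Fin m) ℝ)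
    (hQ : Q.PosSemidef) (hR : R.PosSemidef)
    (Xinf : Set (Fin n → ℝ))
    (hXinf : Xinf = {x | ∃ u : ℕ → Fin m → ℝ, (∀ k, u k ∈ U) ∧ (∀ k, traj A B x u k ∈ X) ∧
      Filter.Tendsto (fun k => traj A B x u k) Filter.atTop (nhds 0)})
    (Vp : (Fin n → ℝ) → ℝ) (hVp : ∀ y, 0 ≤ Vp y) (β : ℝ) (hβ : 0 < β)
    (hdec : ∀ y ∈ Xinf, ∃ u ∈ U, A.mulVec y + B.mulVec u ∈ Xinf ∧
      β * Vp (A.mulVec y + B.mulVec u) + stageCost Q R y u ≤ β * Vp y)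
    (N : ℕ) (hN : 1 ≤ N) (x : Fin n → ℝ) (hx : x ∈ Xinf)
    (u0 : ℕ → Fin m → ℝ) (hu0 : u0 ∈ UNp A B X U Xinf N x)
    (hopt : ∀ u ∈ UNp A B X U Xinf N x, VN A B Q R Vp β N x u0 ≤ VN A B Q R Vp β N x u) :
    A.mulVec x + B.mulVec (u0 0) ∈ Xinf ∧
      (UNp A B X U Xinf N (A.mulVec x + B.mulVec (u0 0))).Nonempty ∧
      V0 A B X U Xinf Q R Vp β N (A.mulVec x + B.mulVec (u0 0)) ≤
        V0 A B X U Xinf Q R Vp β N x - stageCost Q R x (u0 0) := by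
  obtain ⟨M, rfl⟩ : ∃ M, N = M + 1 := ⟨N - 1, (Nat.succ_pred_eq_of_pos hN).symm⟩
  obtain ⟨hu0U, hu0X, hu0N⟩ := hu0
  set y := traj A B x u0 (M + 1) with hy
  obtain ⟨us, husU, hy', hcost⟩ := hdec y hu0N
  have hXinfX : Xinf ⊆ X := by
    intro z hz
    rw [hXinf] at hz
    obtain ⟨w, _, hw, _⟩ := hz
    exact hw 0
  set xp := A.mulVec x + B.mulVec (u0 0) with hxp
  set ut : ℕ → Fin m → ℝ := fun k => if k + 1 < M + 1 then u0 (k + 1) else us with hut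
  have key : ∀ k < M + 1, traj A B xp ut k = traj A B x u0 (k + 1) := by
    intro k hk
    induction k with
    | zero => rfl
    | succ k ih =>
      have hk' : k < M + 1 := Nat.lt_of_succ_lt hk
      show A.mulVec (traj A B xp ut k) + B.mulVec (ut k) = _
      rw [ih hk']
      have : ut k = u0 (k + 1) := if_pos hk
      rw [this]
      rfl
  have htrajN : traj A B xp ut (M + 1) = A.mulVec y + B.mulVec us := by
    show A.mulVec (traj A B xp ut M) + B.mulVec (ut M) = _
    rw [key M (Nat.lt_succ_self M)]
    have : ut M = us := if_neg (lt_irrefl (M + 1))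
    rw [this, ← hy]
  have hutU : ∀ k < M + 1, ut k ∈ U := by
    intro k hk
    by_cases h : k + 1 < M + 1
    · show (if k + 1 < M + 1 then u0 (k + 1) else us) ∈ U
      rw [if_pos h]; exact hu0U (k + 1) h
    · show (if k + 1 < M + 1 then u0 (k + 1) else us) ∈ U
      rw [if_neg h]; exact husU
  have hutX : ∀ k < M + 1, traj A B xp ut k ∈ X := by
    intro k hk
    rw [key k hk]
    by_cases h : k + 1 < M + 1
    · exact hu0X (k + 1) h
    · have : k + 1 = M + 1 := by omega
      rw [this]
      exact hXinfX hu0N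
  have hutmem : ut ∈ UNp A B X U Xinf (M + 1) xp := by
    refine ⟨hutU, hutX, ?_⟩
    rw [htrajN]; exact hy'
  -- xp ∈ Xinf
  have hy'' := hy'
  rw [hXinf] at hy''
  obtain ⟨w, hwU, hwX, hwT⟩ := hy''
  set v : ℕ → Fin m → ℝ := fun k => if k < M + 1 then ut k else w (k - (M + 1)) with hv
  have hveq : ∀ k ≤ M + 1, traj A B xp v k = traj A B xp ut k := by
    intro k hk
    exact traj_congr A B xp k (fun j hj => if_pos (lt_of_lt_of_le hj hk))
  have hshift : ∀ j, traj A B xp v (M + 1 + j) =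
      traj A B (A.mulVec y + B.mulVec us) w j := by
    intro j
    rw [traj_shift]
    have h1 : traj A B xp v (M + 1) = A.mulVec y + B.mulVec us :=
      (hveq (M + 1) le_rfl).trans htrajN
    have h2 : (fun i => v (M + 1 + i)) = w := by
      funext i
      show (if M + 1 + i < M + 1 then ut (M + 1 + i) else w (M + 1 + i - (M + 1))) = w i
      have h3 : M + 1 + i - (M + 1) = i := by omega
      rw [if_neg (by omega), h3]
    rw [h1, h2]
  have hxpXinf : xp ∈ Xinf := by
    rw [hXinf]
    refine ⟨v, ?_, ?_, ?_⟩
    · intro k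
      by_cases hk : k < M + 1
      · show (if k < M + 1 then ut k else w (k - (M + 1))) ∈ U
        rw [if_pos hk]; exact hutU k hk
      · show (if k < M + 1 then ut k else w (k - (M + 1))) ∈ U
        rw [if_neg hk]; exact hwU _
    · intro k
      by_cases hk : k < M + 1
      · rw [hveq k hk.le]; exact hutX k hk
      · have : k = M + 1 + (k - (M + 1)) := by omega
        rw [this, hshift]
        exact hwX _
    · rw [← Filter.tendsto_add_atTop_iff_nat (M + 1)]
      have : (fun k => traj A B xp v (k + (M + 1))) =
          fun k => traj A B (A.mulVec y + B.mulVec us) w k := by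
        funext k
        rw [add_comm, hshift]
      rw [this]
      exact hwT
  -- cost comparison
  have hVNut : VN A B Q R Vp β (M + 1) xp ut =
      β * Vp (A.mulVec y + B.mulVec us) +
        (∑ k ∈ Finset.range M, stageCost Q R (traj A B x u0 (k + 1)) (u0 (k + 1)) +
          stageCost Q R y us) := by
    unfold VN
    rw [htrajN, Finset.sum_range_succ]
    congr 1
    congr 1
    · exact Finset.sum_congr rfl fun k hk => by
        have hk' := Finset.mem_range.mp hk
        rw [key k (Nat.lt_succ_of_lt hk')]
        have : ut k = u0 (k + 1) := if_pos (by omega)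
        rw [this]
    · rw [key M (Nat.lt_succ_self M)]
      have : ut M = us := if_neg (lt_irrefl (M + 1))
      rw [this, ← hy]
  have hVNx : VN A B Q R Vp β (M + 1) x u0 =
      β * Vp y +
        (∑ k ∈ Finset.range M, stageCost Q R (traj A B x u0 (k + 1)) (u0 (k + 1)) +
          stageCost Q R x (u0 0)) := by
    unfold VN
    rw [Finset.sum_range_succ']
    rfl
  have hVNnonneg : ∀ (z : Fin n → ℝ) (u : ℕ → Fin m → ℝ),
      0 ≤ VN A B Q R Vp β (M + 1) z u := by
    intro z u
    apply add_nonneg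
    · exact mul_nonneg hβ.le (hVp _)
    · exact Finset.sum_nonneg fun k _ => stageCost_nonneg hQ hR _ _
  have hbdd : ∀ z : Fin n → ℝ, BddBelow
      {v : ℝ | ∃ u ∈ UNp A B X U Xinf (M + 1) z, v = VN A B Q R Vp β (M + 1) z u} := by
    intro z
    exact ⟨0, by rintro r ⟨u, _, rfl⟩; exact hVNnonneg z u⟩
  have hV0x : V0 A B X U Xinf Q R Vp β (M + 1) x = VN A B Q R Vp β (M + 1) x u0 := by
    unfold V0
    apply le_antisymm
    · exact csInf_le (hbdd x) ⟨u0, ⟨hu0U, hu0X, hu0N⟩, rfl⟩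
    · have hne : {v : ℝ | ∃ u ∈ UNp A B X U Xinf (M + 1) x,
          v = VN A B Q R Vp β (M + 1) x u}.Nonempty := ⟨_, u0, ⟨hu0U, hu0X, hu0N⟩, rfl⟩
      apply le_csInf hne
      rintro r ⟨u, hu, rfl⟩
      exact hopt u hu
  have hV0xp : V0 A B X U Xinf Q R Vp β (M + 1) xp ≤ VN A B Q R Vp β (M + 1) xp ut := by
    unfold V0
    exact csInf_le (hbdd xp) ⟨ut, hutmem, rfl⟩
  refine ⟨hxpXinf, ⟨ut, hutmem⟩, ?_⟩
  rw [hV0x]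
  rw [hVNut] at hV0xp
  rw [hVNx]
  linarith
end
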